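/- The operator H_{α,β} acts diagonally on the tensor product of Verma modules with the stated eigenvalue: for every integer p ≥ 2, all α, β ∈ ℂ and all integers a, b, one has ∑_{i=0}^{4p−1} ∑_{j=0}^{4p−1} exp( (πI/p) · ( −(α+j)(β+i)/2 + (i+β)(α/2 − a) + (j+α)(β/2 − b) ) ) = 4p · exp( (πI/(2p)) · (α−2a)(β−2b) ). -/

import Mathlib

/-!
# Diagonal action of the Cartan part of the twisted R-matrix on Verma modules

This is the computation showing that the Cartan part
`H_{α,β} = (ζ^{αβ/2}/4p) ∑_{i,j=0}^{4p−1} ζ^{−(α+j)(β+i)/2} k^{i+β} ⊗ k^{j+α}`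
of the twisted `R`-matrix of the twisted Drinfeld double of the Borel part of restricted
quantum `sl₂` acts on the vector `v_a ⊗ v_b` of a tensor product of Verma modules
`V_α ⊗ V_β` as the scalar `ζ^{αβ/2}·ζ^{(α−2a)(β−2b)/2}`, where `ζ^x = exp(πIx/p)`.
-/

open Complex

lemma aux_geom (p : ℕ) (hp : 0 < p) (m : ℤ) (hm : ¬ ((4 * (p:ℤ)) ∣ m)) :
    ∑ j ∈ Finset.range (4 * p),
      Complex.exp (-((Real.pi : ℂ) * Complex.I * (m : ℂ)) / (2 * p)) ^ j = 0 := by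
  have hp' : (p : ℂ) ≠ 0 := Nat.cast_ne_zero.mpr hp.ne'
  set x : ℂ := Complex.exp (-((Real.pi : ℂ) * Complex.I * (m : ℂ)) / (2 * p)) with hx
  have hx4 : x ^ (4 * p) = 1 := by
    rw [hx, ← Complex.exp_nat_mul]
    have h : ((4 * p : ℕ) : ℂ) * (-((Real.pi : ℂ) * Complex.I * (m : ℂ)) / (2 * p))
        = ((-m : ℤ) : ℂ) * (2 * (Real.pi : ℂ) * Complex.I) := by
      push_cast; field_simp; ring
    rw [h, Complex.exp_int_mul_two_pi_mul_I]
  have hx1 : x ≠ 1 := by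
    intro h
    rw [hx, Complex.exp_eq_one_iff] at h
    obtain ⟨n, hn⟩ := h
    apply hm
    have hπ : (Real.pi : ℂ) ≠ 0 := by exact_mod_cast Real.pi_ne_zero
    have hI : Complex.I ≠ 0 := Complex.I_ne_zero
    have hm' : (m : ℂ) = ((-4 * (p : ℤ) * n : ℤ) : ℂ) := by
      push_cast
      field_simp at hn
      have key : (Real.pi : ℂ) * Complex.I * (m : ℂ)
          = (Real.pi : ℂ) * Complex.I * (-4 * (p : ℂ) * (n : ℂ)) := by
        linear_combination (-(Real.pi : ℂ) * Complex.I) * hn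
      have := mul_left_cancel₀ (mul_ne_zero hπ hI) key
      rw [this]
    have hmz : m = -4 * (p : ℤ) * n := by exact_mod_cast hm'
    exact ⟨-n, by rw [hmz]; ring⟩
  rw [geom_sum_eq hx1 (4 * p), hx4, sub_self, zero_div]

/-- For every integer `p ≥ 2`, all `α, β ∈ ℂ` and all integers `a, b`:
`∑_{i=0}^{4p−1} ∑_{j=0}^{4p−1}
   exp((πI/p)·(−(α+j)(β+i)/2 + (i+β)(α/2 − a) + (j+α)(β/2 − b)))
 = 4p · exp((πI/(2p))·(α−2a)(β−2b))`. -/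
theorem cartan_diagonal_action (p : ℕ) (hp : 2 ≤ p) (α β : ℂ) (a b : ℤ) :
    ∑ i ∈ Finset.range (4 * p), ∑ j ∈ Finset.range (4 * p),
        Complex.exp ((Real.pi * Complex.I / p) *
          (-((α + (j : ℂ)) * (β + (i : ℂ))) / 2 + ((i : ℂ) + β) * (α / 2 - (a : ℂ))
            + ((j : ℂ) + α) * (β / 2 - (b : ℂ))))
      = (4 * p : ℂ) *
          Complex.exp ((Real.pi * Complex.I / (2 * p)) *
            ((α - 2 * (a : ℂ)) * (β - 2 * (b : ℂ)))) := by
  have hp0 : 0 < p := by omega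
  have hp' : (p : ℂ) ≠ 0 := Nat.cast_ne_zero.mpr hp0.ne'
  set c : ℂ := (Real.pi : ℂ) * Complex.I / p with hc
  set K : ℂ := α * β / 2 - β * a - α * b with hK
  have h1 : ∀ i ∈ Finset.range (4 * p),
      (∑ j ∈ Finset.range (4 * p),
        Complex.exp ((Real.pi * Complex.I / p) *
          (-((α + (j : ℂ)) * (β + (i : ℂ))) / 2 + ((i : ℂ) + β) * (α / 2 - (a : ℂ))
            + ((j : ℂ) + α) * (β / 2 - (b : ℂ)))))
      = Complex.exp (c * K) * Complex.exp (-(c * a) * i) *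
          ∑ j ∈ Finset.range (4 * p),
            Complex.exp (-((Real.pi : ℂ) * Complex.I * ((((i : ℤ) + 2 * b) : ℤ) : ℂ)) / (2 * p)) ^ j := by
    intro i _
    rw [Finset.mul_sum]
    refine Finset.sum_congr rfl fun j _ => ?_
    rw [← Complex.exp_nat_mul, ← Complex.exp_add, ← Complex.exp_add]
    congr 1
    rw [hc, hK]
    push_cast
    field_simp
    ring
  rw [Finset.sum_congr rfl h1]
  set i0 : ℕ := ((-2 * b) % (4 * (p : ℤ))).toNat with hi0def
  have h4p : (0 : ℤ) < 4 * p := by positivity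
  have hi0 : (i0 : ℤ) = (-2 * b) % (4 * (p : ℤ)) :=
    Int.toNat_of_nonneg (Int.emod_nonneg _ h4p.ne')
  have hi0lt : i0 < 4 * p := by
    have := Int.emod_lt_of_pos (-2 * b) h4p
    omega
  have hdvd0 : (4 * (p : ℤ)) ∣ ((i0 : ℤ) + 2 * b) := by
    refine ⟨-((-2 * b) / (4 * (p : ℤ))), ?_⟩
    rw [hi0, mul_neg]
    linarith [Int.emod_add_mul_ediv (-2 * b) (4 * (p : ℤ))]
  rw [Finset.sum_eq_single_of_mem i0 (Finset.mem_range.mpr hi0lt)]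
  · obtain ⟨k, hk⟩ := hdvd0
    have hsum1 : ∑ j ∈ Finset.range (4 * p),
        Complex.exp (-((Real.pi : ℂ) * Complex.I * ((((i0 : ℤ) + 2 * b) : ℤ) : ℂ)) / (2 * p)) ^ j
        = (4 * p : ℂ) := by
      have hone : Complex.exp (-((Real.pi : ℂ) * Complex.I * ((((i0 : ℤ) + 2 * b) : ℤ) : ℂ)) / (2 * p)) = 1 := by
        have h : -((Real.pi : ℂ) * Complex.I * ((((i0 : ℤ) + 2 * b) : ℤ) : ℂ)) / (2 * p)
            = ((-k : ℤ) : ℂ) * (2 * (Real.pi : ℂ) * Complex.I) := by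
          rw [hk]; push_cast; field_simp; ring
        rw [h, Complex.exp_int_mul_two_pi_mul_I]
      rw [hone]; simp
    rw [hsum1]
    have hexp : Complex.exp (-(c * a) * i0) = Complex.exp (c * (2 * a * b)) := by
      have hcast : (i0 : ℂ) = 4 * (p : ℂ) * (k : ℂ) - 2 * (b : ℂ) := by
        have : (i0 : ℤ) = 4 * (p : ℤ) * k - 2 * b := by omega
        exact_mod_cast this
      have h : -(c * a) * (i0 : ℂ) = c * (2 * a * b) + ((-2 * a * k : ℤ) : ℂ) * (2 * (Real.pi : ℂ) * Complex.I) := by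
        rw [hcast, hc]; push_cast; field_simp; ring
      rw [h, Complex.exp_add, Complex.exp_int_mul_two_pi_mul_I, mul_one]
    rw [hexp, ← Complex.exp_add, mul_comm]
    have harg : c * K + c * (2 * (a : ℂ) * (b : ℂ))
        = (Real.pi : ℂ) * Complex.I / (2 * p) * ((α - 2 * (a : ℂ)) * (β - 2 * (b : ℂ))) := by
      rw [hc, hK]; field_simp; ring
    rw [harg]
  · intro i hi hne
    have hndvd : ¬ ((4 * (p : ℤ)) ∣ ((i : ℤ) + 2 * b)) := by
      intro ⟨k, hk⟩
      apply hne
      have hilt : (i : ℤ) < 4 * p := by exact_mod_cast Finset.mem_range.mp hi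
      have h1 : (i : ℤ) % (4 * (p : ℤ)) = (i : ℤ) := Int.emod_eq_of_lt (by positivity) hilt
      have h2 : (-2 * b) % (4 * (p : ℤ)) = (i : ℤ) % (4 * (p : ℤ)) :=
        Int.modEq_iff_dvd.mpr ⟨k, by linarith⟩
      have : (i0 : ℤ) = (i : ℤ) := by rw [hi0, h2, h1]
      exact_mod_cast this.symm
    rw [aux_geom p hp0 _ hndvd, mul_zero]
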